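/- Any finite subgroup Γ of (C*)^3 invariant under an A_4-action as above contains a subgroup Γ' isomorphic to μ_m^3 for some m, with index [Γ : Γ'] ≤ 16. -/

import Mathlib

/-- The three-dimensional torus `T = (ℂ*)³`. -/
abbrev T3 : Type := ℂˣ × ℂˣ × ℂˣ

/-- Abbreviation for the abstract group `μ_a × μ_b × μ_c`. -/
abbrev MZ (a b c : ℕ) : Type :=
  Multiplicative (ZMod a) × Multiplicative (ZMod b) × Multiplicative (ZMod c)

set_option maxHeartbeats 1000000 in
/-- Any finite subgroup `Γ` of `(ℂ*)³` invariant under the `A₄`-action (generated by the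
cyclic permutation of coordinates and pairwise sign-inversions) contains a subgroup `Γ'`
isomorphic to `μ_m³` for some `m`, of index `[Γ : Γ'] ≤ 16`. -/
theorem stmt13 (Γ : Subgroup T3) [Finite Γ]
    (hcyc : ∀ t : T3, t ∈ Γ → (t.2.2, t.1, t.2.1) ∈ Γ)
    (hA : ∀ t : T3, t ∈ Γ → (t.1⁻¹, t.2.1⁻¹, t.2.2) ∈ Γ)
    (hB : ∀ t : T3, t ∈ Γ → (t.1⁻¹, t.2.1, t.2.2⁻¹) ∈ Γ) :
    ∃ m : ℕ, 0 < m ∧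
      ∃ Γ' : Subgroup T3, Γ' ≤ Γ ∧ Nonempty (Γ' ≃* MZ m m m) ∧
        Γ'.relIndex Γ ≤ 16 := by
  classical
  -- squares of coordinates embed in each slot
  have key1 : ∀ t : T3, t ∈ Γ → ((t.1 ^ 2, 1, 1) : T3) ∈ Γ := by
    intro t ht
    have h1 := Γ.inv_mem (Γ.mul_mem (hA t ht) (hB t ht))
    have e : (((t.1⁻¹, t.2.1⁻¹, t.2.2) * (t.1⁻¹, t.2.1, t.2.2⁻¹) : T3))⁻¹
        = ((t.1 ^ 2, 1, 1) : T3) := by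
      simp [Prod.ext_iff, pow_two, mul_inv_rev, mul_comm]
    rwa [e] at h1
  have key2 : ∀ t : T3, t ∈ Γ → ((1, t.2.1 ^ 2, 1) : T3) ∈ Γ := by
    intro t ht
    have h1 := Γ.mul_mem ht (hB t ht)
    have e : ((t * (t.1⁻¹, t.2.1, t.2.2⁻¹) : T3)) = ((1, t.2.1 ^ 2, 1) : T3) := by
      simp [Prod.ext_iff, pow_two]
    rwa [e] at h1
  have key3 : ∀ t : T3, t ∈ Γ → ((1, 1, t.2.2 ^ 2) : T3) ∈ Γ := by
    intro t ht
    have h1 := Γ.mul_mem ht (hA t ht)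
    have e : ((t * (t.1⁻¹, t.2.1⁻¹, t.2.2) : T3)) = ((1, 1, t.2.2 ^ 2) : T3) := by
      simp [Prod.ext_iff, pow_two]
    rwa [e] at h1
  -- the first projection
  set f : T3 →* ℂˣ := MonoidHom.fst ℂˣ (ℂˣ × ℂˣ) with hf
  set P : Subgroup ℂˣ := Γ.map f with hP
  have hPset : ((P : Set ℂˣ)).Finite := by
    have : ((P : Set ℂˣ)) = f '' (Γ : Set T3) := by
      simp [hP, Subgroup.coe_map]
    rw [this]
    exact (Set.toFinite (Γ : Set T3)).image f
  haveI : Finite P := hPset.to_subtype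
  -- all three projections lie in P
  have memP1 : ∀ t : T3, t ∈ Γ → t.1 ∈ P := fun t ht => ⟨t, ht, rfl⟩
  have memP2 : ∀ t : T3, t ∈ Γ → t.2.1 ∈ P := by
    intro t ht
    exact ⟨_, hcyc _ (hcyc t ht), rfl⟩
  have memP3 : ∀ t : T3, t ∈ Γ → t.2.2 ∈ P := by
    intro t ht
    exact ⟨_, hcyc t ht, rfl⟩
  -- squares of elements of P sit inside Γ in each coordinate
  have sq1 : ∀ x : ℂˣ, x ∈ P → ((x ^ 2, 1, 1) : T3) ∈ Γ := by
    rintro x ⟨t, ht, rfl⟩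
    exact key1 t ht
  have sq2 : ∀ x : ℂˣ, x ∈ P → ((1, x ^ 2, 1) : T3) ∈ Γ := by
    rintro x ⟨t, ht, rfl⟩
    exact key2 _ (hcyc t ht)
  have sq3 : ∀ x : ℂˣ, x ∈ P → ((1, 1, x ^ 2) : T3) ∈ Γ := by
    rintro x ⟨t, ht, rfl⟩
    exact key3 _ (hcyc _ (hcyc t ht))
  -- P is cyclic; pick a generator
  obtain ⟨g, hg⟩ := IsCyclic.exists_generator (α := P)
  set g' : ℂˣ := (g : ℂˣ) with hg'
  have hPzp : Subgroup.zpowers g' = P := by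
    apply le_antisymm
    · rw [Subgroup.zpowers_le]
      exact g.2
    · intro x hx
      obtain ⟨k, hk⟩ := hg ⟨x, hx⟩
      exact ⟨k, by simpa using congrArg Subtype.val hk⟩
  set n : ℕ := orderOf g' with hn
  have hcardP : Nat.card P = n := by rw [← hPzp, Nat.card_zpowers]
  have hnpos : 0 < n := by
    rw [← hcardP]; exact Nat.card_pos
  -- the subgroup of squares
  set h : ℂˣ := g' ^ 2 with hh
  set Q : Subgroup ℂˣ := Subgroup.zpowers h with hQ
  have hQP : Q ≤ P := by
    rw [hQ, Subgroup.zpowers_le, ← hPzp]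
    refine ⟨2, ?_⟩
    show g' ^ (2 : ℤ) = h
    rw [hh]
    exact_mod_cast zpow_natCast g' 2
  haveI : Finite Q := Set.Finite.to_subtype
    (hPset.subset (show (Q : Set ℂˣ) ⊆ (P : Set ℂˣ) from fun x hx => hQP hx))
  set m : ℕ := Nat.card Q with hm
  have hmpos : 0 < m := Nat.card_pos
  have hcardQ : m = n / Nat.gcd n 2 := by
    rw [hm, hQ, Nat.card_zpowers, hh, orderOf_pow' _ (by norm_num : (2:ℕ) ≠ 0), ← hn]
  have hn2m : n ≤ 2 * m := by
    rw [hcardQ]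
    have hdvd : Nat.gcd n 2 ∣ n := Nat.gcd_dvd_left n 2
    have h2 : Nat.gcd n 2 ≤ 2 := Nat.le_of_dvd (by norm_num) (Nat.gcd_dvd_right n 2)
    calc n = n / Nat.gcd n 2 * Nat.gcd n 2 := (Nat.div_mul_cancel hdvd).symm
    _ ≤ n / Nat.gcd n 2 * 2 := Nat.mul_le_mul_left _ h2
    _ = 2 * (n / Nat.gcd n 2) := by ring
  -- every element of Q is a square of an element of P
  have hQsq : ∀ q : ℂˣ, q ∈ Q → ∃ x ∈ P, q = x ^ 2 := by
    rintro q ⟨k, rfl⟩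
    refine ⟨g' ^ k, ?_, ?_⟩
    · rw [← hPzp]; exact ⟨k, rfl⟩
    · show h ^ k = (g' ^ k) ^ 2
      rw [hh]
      group
  -- the subgroup Γ' = Q × Q × Q
  set Γ' : Subgroup T3 := Q.prod (Q.prod Q) with hΓ'
  have hle : Γ' ≤ Γ := by
    rintro ⟨a, b, c⟩ ⟨ha, hb, hc⟩
    obtain ⟨x, hx, rfl⟩ := hQsq a ha
    obtain ⟨y, hy, rfl⟩ := hQsq b hb
    obtain ⟨z, hz, rfl⟩ := hQsq c hc
    have : (((x ^ 2, 1, 1) : T3) * (1, y ^ 2, 1) * (1, 1, z ^ 2)) ∈ Γ :=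
      Γ.mul_mem (Γ.mul_mem (sq1 x hx) (sq2 y hy)) (sq3 z hz)
    simpa using this
  -- Γ ≤ P × P × P
  have hΓle : Γ ≤ P.prod (P.prod P) := by
    intro t ht
    exact ⟨memP1 t ht, memP2 t ht, memP3 t ht⟩
  -- cardinalities
  have cardprod : ∀ (H : Subgroup ℂˣ), Nat.card (H.prod (H.prod H)) =
      Nat.card H * (Nat.card H * Nat.card H) := by
    intro H
    rw [Nat.card_congr (Subgroup.prodEquiv H (H.prod H)).toEquiv, Nat.card_prod,
      Nat.card_congr (Subgroup.prodEquiv H H).toEquiv, Nat.card_prod]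
  haveI : Finite (P.prod P) := Finite.of_equiv _ (Subgroup.prodEquiv P P).toEquiv.symm
  haveI : Finite (P.prod (P.prod P)) :=
    Finite.of_equiv _ (Subgroup.prodEquiv P (P.prod P)).toEquiv.symm
  have hcardΓ : Nat.card Γ ≤ n * (n * n) := by
    calc Nat.card Γ ≤ Nat.card (P.prod (P.prod P)) := Subgroup.card_le_of_le hΓle
    _ = n * (n * n) := by rw [cardprod P, hcardP]
  have hcardΓ' : Nat.card Γ' = m * (m * m) := by
    rw [hΓ', cardprod Q, hm]
  -- the isomorphism
  haveI : IsCyclic Q := inferInstance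
  have eQ : Q ≃* Multiplicative (ZMod m) := (zmodCyclicMulEquiv (inferInstance : IsCyclic Q)).symm
  have iso : Γ' ≃* MZ m m m := by
    refine (Subgroup.prodEquiv Q (Q.prod Q)).trans ?_
    exact MulEquiv.prodCongr eQ ((Subgroup.prodEquiv Q Q).trans (MulEquiv.prodCongr eQ eQ))
  -- the index bound
  refine ⟨m, hmpos, Γ', hle, ⟨iso⟩, ?_⟩
  have hrel : Γ'.relIndex Γ * Nat.card Γ' = Nat.card Γ := by
    have := Subgroup.index_mul_card (Γ'.subgroupOf Γ)
    rwa [Nat.card_congr (Subgroup.subgroupOfEquivOfLe hle).toEquiv] at this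
  have hbound : Nat.card Γ ≤ 8 * Nat.card Γ' := by
    rw [hcardΓ']
    calc Nat.card Γ ≤ n * (n * n) := hcardΓ
    _ ≤ (2 * m) * ((2 * m) * (2 * m)) :=
        Nat.mul_le_mul hn2m (Nat.mul_le_mul hn2m hn2m)
    _ = 8 * (m * (m * m)) := by ring
  have hpos : 0 < Nat.card Γ' := by rw [hcardΓ']; positivity
  have hmul : Γ'.relIndex Γ * Nat.card Γ' ≤ 8 * Nat.card Γ' := by
    rw [hrel]; exact hbound
  have h8 : Γ'.relIndex Γ ≤ 8 := Nat.le_of_mul_le_mul_right hmul hpos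
  omega
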